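/- Let p be a prime, R a commutative ring of characteristic p, and I an ideal of R with I·I = 0. Let K denote the kernel of W(R) → W(R/I). Let h ≥ 2, let B be an invertible h × h matrix over W(R), let s be an h × h matrix with entries in K, and let a be an (h−1) × (h−1) matrix, b an (h−1) × 1 matrix, c a 1 × (h−1) matrix, and d a 1 × 1 matrix, all with entries in K. Set N = [a, v(b); c, d] and M = [f(a), b; p·f(c), f(d)] in block form. Then I + N is invertible, M = [0, b; 0, 0], and (I + M)(B + s)(I + N)⁻¹ = B + s + [0, b; 0, 0]·B − B·N. -/

import Mathlib

open MvPolynomial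

section PolyAux

variable {σ : Type*}

/-- The ideal generated by products `X v * X w` with `s v` and `t w`. -/
private noncomputable def Jprod (s t : σ → Prop) : Ideal (MvPolynomial σ ℤ) :=
  Ideal.span {r : MvPolynomial σ ℤ | ∃ v w, s v ∧ t w ∧ r = X v * X w}

private lemma sub_kill_mem (s : σ → Prop) [DecidablePred s] (Q : MvPolynomial σ ℤ) :
    Q - aeval (fun v => if s v then (0 : MvPolynomial σ ℤ) else X v) Q
      ∈ Ideal.span (X '' setOf s : Set (MvPolynomial σ ℤ)) := by
  induction Q using MvPolynomial.induction_on with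
  | C a =>
      have h : (C a : MvPolynomial σ ℤ) -
          aeval (fun v => if s v then (0 : MvPolynomial σ ℤ) else X v) (C a) = 0 := by
        simp [aeval_C]
      rw [h]; exact zero_mem _
  | add P1 P2 h1 h2 =>
      have h : (P1 + P2) - aeval (fun v => if s v then (0 : MvPolynomial σ ℤ) else X v) (P1 + P2)
          = (P1 - aeval (fun v => if s v then (0 : MvPolynomial σ ℤ) else X v) P1)
            + (P2 - aeval (fun v => if s v then (0 : MvPolynomial σ ℤ) else X v) P2) := by
        simp only [map_add]; ring
      rw [h]; exact add_mem h1 h2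
  | mul_X Q v ih =>
      by_cases hv : s v
      · have h : Q * X v - aeval (fun v => if s v then (0 : MvPolynomial σ ℤ) else X v) (Q * X v)
            = Q * X v := by
          simp only [map_mul, aeval_X, if_pos hv, mul_zero, sub_zero]
        rw [h]
        exact Ideal.mul_mem_left _ Q (Ideal.subset_span ⟨v, hv, rfl⟩)
      · have h : Q * X v - aeval (fun v => if s v then (0 : MvPolynomial σ ℤ) else X v) (Q * X v)
            = (Q - aeval (fun v => if s v then (0 : MvPolynomial σ ℤ) else X v) Q) * X v := by
          simp only [map_mul, aeval_X, if_neg hv]; ring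
        rw [h]
        exact Ideal.mul_mem_right _ _ ih

private lemma mul_X_mem_left (s t : σ → Prop) (v : σ) (hv : s v) {q : MvPolynomial σ ℤ}
    (hq : q ∈ Ideal.span (X '' setOf t : Set (MvPolynomial σ ℤ))) :
    q * X v ∈ Jprod s t := by
  induction hq using Submodule.span_induction with
  | mem r hr =>
      obtain ⟨w, hw, rfl⟩ := hr
      exact Ideal.subset_span ⟨v, w, hv, hw, by ring⟩
  | zero => rw [zero_mul]; exact zero_mem _
  | add a b _ _ ha hb => rw [add_mul]; exact add_mem ha hb
  | smul r a _ h => rw [smul_eq_mul, mul_assoc]; exact Ideal.mul_mem_left _ _ h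

private lemma mul_X_mem_right (s t : σ → Prop) (v : σ) (hv : t v) {q : MvPolynomial σ ℤ}
    (hq : q ∈ Ideal.span (X '' setOf s : Set (MvPolynomial σ ℤ))) :
    q * X v ∈ Jprod s t := by
  induction hq using Submodule.span_induction with
  | mem r hr =>
      obtain ⟨w, hw, rfl⟩ := hr
      exact Ideal.subset_span ⟨w, v, hw, hv, rfl⟩
  | zero => rw [zero_mul]; exact zero_mem _
  | add a b _ _ ha hb => rw [add_mul]; exact add_mem ha hb
  | smul r a _ h => rw [smul_eq_mul, mul_assoc]; exact Ideal.mul_mem_left _ _ h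

private lemma key_mem (s t : σ → Prop) [DecidablePred s] [DecidablePred t]
    (hst : ∀ v, s v → ¬ t v) (Q : MvPolynomial σ ℤ) :
    Q - aeval (fun v => if s v then (0 : MvPolynomial σ ℤ) else X v) Q
      - aeval (fun v => if t v then (0 : MvPolynomial σ ℤ) else X v) Q
      + aeval (fun v => if s v then (0 : MvPolynomial σ ℤ) else X v)
          (aeval (fun v => if t v then (0 : MvPolynomial σ ℤ) else X v) Q)
      ∈ Jprod s t := by
  set G := aeval (R := ℤ) (fun v => if s v then (0 : MvPolynomial σ ℤ) else X v) with hG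
  set H := aeval (R := ℤ) (fun v => if t v then (0 : MvPolynomial σ ℤ) else X v) with hH
  induction Q using MvPolynomial.induction_on with
  | C a =>
      have h : (C a : MvPolynomial σ ℤ) - G (C a) - H (C a) + G (H (C a)) = 0 := by
        simp only [hG, hH, aeval_C]; simp
      rw [h]; exact zero_mem _
  | add P1 P2 h1 h2 =>
      have h : (P1 + P2) - G (P1 + P2) - H (P1 + P2) + G (H (P1 + P2))
          = (P1 - G P1 - H P1 + G (H P1)) + (P2 - G P2 - H P2 + G (H P2)) := by
        simp only [map_add]; ring
      rw [h]; exact add_mem h1 h2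
  | mul_X Q v ih =>
      by_cases hvs : s v
      · have hvt : ¬ t v := hst v hvs
        have h : Q * X v - G (Q * X v) - H (Q * X v) + G (H (Q * X v))
            = (Q - H Q) * X v := by
          simp only [hG, hH, map_mul, aeval_X, if_pos hvs, if_neg hvt, mul_zero, map_zero]; ring
        rw [h]
        exact mul_X_mem_left s t v hvs (sub_kill_mem t Q)
      · by_cases hvt : t v
        · have h : Q * X v - G (Q * X v) - H (Q * X v) + G (H (Q * X v))
              = (Q - G Q) * X v := by
            simp only [hG, hH, map_mul, aeval_X, if_pos hvt, if_neg hvs, mul_zero, map_zero]; ring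
          rw [h]
          exact mul_X_mem_right s t v hvt (sub_kill_mem s Q)
        · have h : Q * X v - G (Q * X v) - H (Q * X v) + G (H (Q * X v))
              = (Q - G Q - H Q + G (H Q)) * X v := by
            simp only [hG, hH, map_mul, aeval_X, if_neg hvs, if_neg hvt]; ring
          rw [h]
          exact Ideal.mul_mem_right _ _ ih

private lemma mem_Jprod (s t : σ → Prop) [DecidablePred s] [DecidablePred t]
    (hst : ∀ v, s v → ¬ t v) (P : MvPolynomial σ ℤ)
    (h0 : aeval (fun v => if s v then (0 : MvPolynomial σ ℤ) else X v) P = 0)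
    (h1 : aeval (fun v => if t v then (0 : MvPolynomial σ ℤ) else X v) P = 0) :
    P ∈ Jprod s t := by
  have h := key_mem s t hst P
  rwa [h1, h0, map_zero, sub_zero, sub_zero, add_zero] at h

end PolyAux

section WittAux

variable {p : ℕ} [hp : Fact p.Prime] {R : Type} [CommRing R]

private lemma witt_sq_zero (I : Ideal R) (hI : I * I = ⊥)
    (x y : WittVector p R) (hx : ∀ n, x.coeff n ∈ I) (hy : ∀ n, y.coeff n ∈ I) :
    x * y = 0 := by
  ext n
  rw [WittVector.mul_coeff, WittVector.zero_coeff]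
  set S := MvPolynomial (Fin 2 × ℕ) ℤ
  set s : Fin 2 × ℕ → Prop := fun v => v.1 = 0 with hs
  set t : Fin 2 × ℕ → Prop := fun v => v.1 = 1 with ht
  have hst : ∀ v, s v → ¬ t v := by
    intro v h0 h1
    rw [hs] at h0; rw [ht] at h1
    rw [h0] at h1
    exact absurd h1 (by decide)
  have h0 : aeval (fun v : Fin 2 × ℕ => if s v then (0 : S) else X v) (WittVector.wittMul p n) = 0 := by
    have hz := WittVector.mul_coeff (p := p) (0 : WittVector p S)
      (WittVector.mk p fun j => X ((1 : Fin 2), j)) n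
    rw [zero_mul, WittVector.zero_coeff] at hz
    have hu : Function.uncurry
        ![(0 : WittVector p S).coeff, (WittVector.mk p fun j => X ((1 : Fin 2), j)).coeff]
        = fun v : Fin 2 × ℕ => if s v then (0 : S) else X v := by
      funext v
      obtain ⟨i, j⟩ := v
      fin_cases i <;>
        simp [Function.uncurry, WittVector.coeff_mk, WittVector.zero_coeff, hs]
    rw [WittVector.peval, hu] at hz
    exact hz.symm
  have h1 : aeval (fun v : Fin 2 × ℕ => if t v then (0 : S) else X v) (WittVector.wittMul p n) = 0 := by
    have hz := WittVector.mul_coeff (p := p)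
      (WittVector.mk p fun j => X ((0 : Fin 2), j)) (0 : WittVector p S) n
    rw [mul_zero, WittVector.zero_coeff] at hz
    have hu : Function.uncurry
        ![(WittVector.mk p fun j => X ((0 : Fin 2), j)).coeff, (0 : WittVector p S).coeff]
        = fun v : Fin 2 × ℕ => if t v then (0 : S) else X v := by
      funext v
      obtain ⟨i, j⟩ := v
      fin_cases i <;>
        simp [Function.uncurry, WittVector.coeff_mk, WittVector.zero_coeff, ht]
    rw [WittVector.peval, hu] at hz
    exact hz.symm
  have hmem : WittVector.wittMul p n ∈ Jprod s t := mem_Jprod s t hst _ h0 h1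
  rw [WittVector.peval]
  revert hmem
  generalize WittVector.wittMul p n = P
  intro hmem
  induction hmem using Submodule.span_induction with
  | mem r hr =>
      obtain ⟨v, w, hv, hw, rfl⟩ := hr
      rw [map_mul, aeval_X, aeval_X]
      obtain ⟨v1, v2⟩ := v
      obtain ⟨w1, w2⟩ := w
      rw [hs] at hv; rw [ht] at hw
      simp only at hv hw
      subst hv; subst hw
      have h2 : Function.uncurry ![x.coeff, y.coeff] ((0 : Fin 2), v2) = x.coeff v2 := by
        simp [Function.uncurry]
      have h3 : Function.uncurry ![x.coeff, y.coeff] ((1 : Fin 2), w2) = y.coeff w2 := by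
        simp [Function.uncurry]
      rw [h2, h3]
      have hmem2 : x.coeff v2 * y.coeff w2 ∈ I * I := Ideal.mul_mem_mul (hx _) (hy _)
      rw [hI] at hmem2
      exact (Submodule.mem_bot _).mp hmem2
  | zero => exact map_zero _
  | add a b _ _ ha hb => rw [map_add, ha, hb, add_zero]
  | smul r a _ h => rw [smul_eq_mul, map_mul, h, mul_zero]

private lemma frob_kill [CharP R p] (I : Ideal R) (hI : I * I = ⊥)
    (x : WittVector p R) (hx : ∀ n, x.coeff n ∈ I) :
    WittVector.frobenius x = (0 : WittVector p R) := by
  ext n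
  rw [WittVector.coeff_frobenius_charP, WittVector.zero_coeff]
  have h2 : x.coeff n * x.coeff n = 0 := by
    have hmem : x.coeff n * x.coeff n ∈ I * I := Ideal.mul_mem_mul (hx n) (hx n)
    rw [hI] at hmem
    exact (Submodule.mem_bot _).mp hmem
  have hple : 2 ≤ p := hp.out.two_le
  have h3 : x.coeff n ^ p = x.coeff n ^ (p - 2) * (x.coeff n * x.coeff n) := by
    rw [← pow_two, ← pow_add]
    congr 1
    omega
  rw [h3, h2, mul_zero]

end WittAux

open Matrix WittVector in
theorem display_lift_isomorphism_formula (p : ℕ) [Fact p.Prime]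
    (R : Type) [CommRing R] [CharP R p] (I : Ideal R) (hI : I * I = ⊥)
    (K : Ideal (WittVector p R))
    (hK : K = RingHom.ker (WittVector.map (p := p) (Ideal.Quotient.mk I)))
    (n : ℕ) (hn : 1 ≤ n)
    (B : Matrix (Fin n ⊕ Fin 1) (Fin n ⊕ Fin 1) (WittVector p R)) (hB : IsUnit B)
    (s : Matrix (Fin n ⊕ Fin 1) (Fin n ⊕ Fin 1) (WittVector p R))
    (hs : ∀ i j, s i j ∈ K)
    (a : Matrix (Fin n) (Fin n) (WittVector p R)) (ha : ∀ i j, a i j ∈ K)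
    (b : Matrix (Fin n) (Fin 1) (WittVector p R)) (hb : ∀ i j, b i j ∈ K)
    (c : Matrix (Fin 1) (Fin n) (WittVector p R)) (hc : ∀ i j, c i j ∈ K)
    (d : Matrix (Fin 1) (Fin 1) (WittVector p R)) (hd : ∀ i j, d i j ∈ K)
    (N : Matrix (Fin n ⊕ Fin 1) (Fin n ⊕ Fin 1) (WittVector p R))
    (hN : N = Matrix.fromBlocks a (b.map ⇑(WittVector.verschiebung (p := p) (R := R))) c d)
    (M : Matrix (Fin n ⊕ Fin 1) (Fin n ⊕ Fin 1) (WittVector p R))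
    (hM : M = Matrix.fromBlocks
      (a.map ⇑(WittVector.frobenius : WittVector p R →+* WittVector p R)) b
      ((p : WittVector p R) • c.map ⇑(WittVector.frobenius : WittVector p R →+* WittVector p R))
      (d.map ⇑(WittVector.frobenius : WittVector p R →+* WittVector p R))) :
    IsUnit (1 + N) ∧
    M = Matrix.fromBlocks 0 b 0 0 ∧
    (1 + M) * (B + s) * (1 + N)⁻¹ =
      B + s + Matrix.fromBlocks 0 b 0 0 * B - B * N := by
  have memK : ∀ x : WittVector p R, x ∈ K ↔ ∀ k, x.coeff k ∈ I := by
    intro x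
    rw [hK, RingHom.mem_ker, WittVector.ext_iff]
    constructor
    · intro h k
      have hk := h k
      rw [WittVector.map_coeff, WittVector.zero_coeff] at hk
      exact Ideal.Quotient.eq_zero_iff_mem.mp hk
    · intro h k
      rw [WittVector.map_coeff, WittVector.zero_coeff]
      exact Ideal.Quotient.eq_zero_iff_mem.mpr (h k)
  have hKK : ∀ {x y : WittVector p R}, x ∈ K → y ∈ K → x * y = 0 := by
    intro x y hx hy
    exact witt_sq_zero I hI x y ((memK x).mp hx) ((memK y).mp hy)
  have hvK : ∀ x : WittVector p R, x ∈ K → WittVector.verschiebung x ∈ K := by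
    intro x hx
    have hx' := (memK x).mp hx
    refine (memK _).mpr fun k => ?_
    cases k with
    | zero => rw [WittVector.verschiebung_coeff_zero]; exact I.zero_mem
    | succ k => rw [WittVector.verschiebung_coeff_succ]; exact hx' k
  have matzero : ∀ (X Y : Matrix (Fin n ⊕ Fin 1) (Fin n ⊕ Fin 1) (WittVector p R)),
      (∀ i j, X i j ∈ K) → (∀ i j, Y i j ∈ K) → X * Y = 0 := by
    intro X Y hX hY
    refine Matrix.ext fun i j => ?_
    rw [Matrix.mul_apply, Matrix.zero_apply]
    exact Finset.sum_eq_zero fun k _ => hKK (hX i k) (hY k j)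
  have hNK : ∀ i j, N i j ∈ K := by
    rw [hN]
    rintro (i | i) (j | j)
    · simpa using ha i j
    · simpa using hvK _ (hb i j)
    · simpa using hc i j
    · simpa using hd i j
  have hfa : a.map ⇑(WittVector.frobenius : WittVector p R →+* WittVector p R) = 0 := by
    refine Matrix.ext fun i j => ?_
    simp only [Matrix.map_apply, Matrix.zero_apply]
    exact frob_kill I hI _ ((memK _).mp (ha i j))
  have hfc : c.map ⇑(WittVector.frobenius : WittVector p R →+* WittVector p R) = 0 := by
    refine Matrix.ext fun i j => ?_
    simp only [Matrix.map_apply, Matrix.zero_apply]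
    exact frob_kill I hI _ ((memK _).mp (hc i j))
  have hfd : d.map ⇑(WittVector.frobenius : WittVector p R →+* WittVector p R) = 0 := by
    refine Matrix.ext fun i j => ?_
    simp only [Matrix.map_apply, Matrix.zero_apply]
    exact frob_kill I hI _ ((memK _).mp (hd i j))
  have hMeq : M = Matrix.fromBlocks 0 b 0 0 := by
    rw [hM, hfa, hfc, hfd, smul_zero]
  have hMK : ∀ i j, M i j ∈ K := by
    rw [hMeq]
    rintro (i | i) (j | j)
    · simpa using K.zero_mem
    · simpa using hb i j
    · simpa using K.zero_mem
    · simpa using K.zero_mem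
  have hNN : N * N = 0 := matzero _ _ hNK hNK
  have hMs : M * s = 0 := matzero _ _ hMK hs
  have hsN : s * N = 0 := matzero _ _ hs hNK
  have hMBK : ∀ i j, (M * B) i j ∈ K := by
    intro i j
    rw [Matrix.mul_apply]
    exact Submodule.sum_mem K fun k _ => Ideal.mul_mem_right _ _ (hMK i k)
  have hMBN : M * B * N = 0 := matzero _ _ hMBK hNK
  have h1 : (1 + N) * (1 - N) = 1 := by
    have e : (1 + N) * (1 - N) = 1 - N * N := by noncomm_ring
    rw [e, hNN, sub_zero]
  have h2 : (1 - N) * (1 + N) = 1 := by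
    have e : (1 - N) * (1 + N) = 1 - N * N := by noncomm_ring
    rw [e, hNN, sub_zero]
  have hU : IsUnit (1 + N) := ⟨⟨1 + N, 1 - N, h1, h2⟩, rfl⟩
  have hinv : (1 + N)⁻¹ = 1 - N := Matrix.inv_eq_right_inv h1
  refine ⟨hU, hMeq, ?_⟩
  rw [hinv, ← hMeq]
  have e : (1 + M) * (B + s) * (1 - N)
      = B + s + M * B - B * N + (M * s - s * N - M * B * N - M * s * N) := by
    noncomm_ring
  rw [e, hMs, hsN, hMBN, zero_mul]
  simp
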